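/- Sufficient condition for full column rank (pseudoinverse condition): Let A_c, Δ ∈ ℝ^{m×n} with Δ ≥ 0 entrywise. Suppose A_c has full column rank n (so that A_cᵀA_c is invertible and the Moore–Penrose inverse is A_c^† = (A_cᵀA_c)^{-1}A_cᵀ). If the spectral radius of the nonnegative matrix |A_c^†| Δ (entrywise absolute value of A_c^†, times Δ) is strictly less than 1, then every real matrix A with |A − A_c| ≤ Δ entrywise has full column rank n. -/

import Mathlib

open Filter Topology
open scoped ENNReal NNReal

attribute [local instance] Matrix.linftyOpNormedRing Matrix.linftyOpNormedAlgebra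

lemma aux_norm_pow_tendsto_zero {n : ℕ} [NeZero n] (C : Matrix (Fin n) (Fin n) ℂ)
    (hρ : ∀ μ ∈ spectrum ℂ C, ‖μ‖ < 1) :
    Tendsto (fun k => ‖C ^ k‖) atTop (𝓝 0) := by
  haveI : Nontrivial (Matrix (Fin n) (Fin n) ℂ) := by
    refine ⟨0, 1, fun h => ?_⟩
    have i : Fin n := ⟨0, Nat.pos_of_ne_zero (NeZero.ne n)⟩
    have := congrFun (congrFun h i) i
    simp [Matrix.one_apply_eq] at this
  have h1 : spectralRadius ℂ C < 1 := by
    have := spectrum.spectralRadius_lt_of_forall_lt (a := C) (r := 1)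
      (fun z hz => by simpa [← NNReal.coe_lt_coe] using hρ z hz)
    simpa using this
  obtain ⟨r, hr1, hr2⟩ := ENNReal.lt_iff_exists_nnreal_btwn.mp h1
  have hg := spectrum.pow_nnnorm_pow_one_div_tendsto_nhds_spectralRadius C
  have hev : ∀ᶠ k : ℕ in atTop, ((‖C ^ k‖₊ : ℝ≥0∞)) ^ (1 / (k:ℝ)) < (r : ℝ≥0∞) :=
    hg.eventually_lt_const hr1
  have hrlt1 : (r : ℝ) < 1 := by exact_mod_cast ENNReal.coe_lt_one_iff.mp hr2
  have hbound : ∀ᶠ k in atTop, ‖C ^ k‖ ≤ (r : ℝ) ^ k := by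
    filter_upwards [hev, eventually_ge_atTop 1] with k hk hk1
    have hk0 : (k:ℝ) ≠ 0 := by positivity
    have h2 := ENNReal.rpow_lt_rpow hk (by positivity : (0:ℝ) < (k:ℝ))
    rw [← ENNReal.rpow_mul, one_div, inv_mul_cancel₀ hk0, ENNReal.rpow_one] at h2
    have h3 : (‖C ^ k‖₊ : ℝ≥0∞) < ((r ^ k : ℝ≥0) : ℝ≥0∞) := by
      rwa [ENNReal.rpow_natCast, ← ENNReal.coe_pow] at h2
    have h4 : ‖C ^ k‖₊ < r ^ k := by exact_mod_cast h3
    have := (NNReal.coe_lt_coe.mpr h4).le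
    simpa using this
  refine squeeze_zero' (Eventually.of_forall fun k => norm_nonneg _) hbound ?_
  exact tendsto_pow_atTop_nhds_zero_of_lt_one r.coe_nonneg hrlt1

lemma aux_entry_le_norm {n : ℕ} (D : Matrix (Fin n) (Fin n) ℂ) (i j : Fin n) :
    ‖D i j‖ ≤ ‖D‖ := by
  rw [Matrix.linfty_opNorm_def]
  have h1 : ‖D i j‖₊ ≤ ∑ j' : Fin n, ‖D i j'‖₊ :=
    Finset.single_le_sum (f := fun j' => ‖D i j'‖₊) (fun _ _ => zero_le) (Finset.mem_univ j)
  have h2 : (∑ j' : Fin n, ‖D i j'‖₊) ≤ (Finset.univ : Finset (Fin n)).sup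
      fun i : Fin n => ∑ j' : Fin n, ‖D i j'‖₊ :=
    Finset.le_sup (f := fun i : Fin n => ∑ j' : Fin n, ‖D i j'‖₊) (Finset.mem_univ i)
  exact_mod_cast h1.trans h2

/-- Sufficient condition for full column rank: if `A_c` has full column rank
(so `A_c† = (A_cᵀ A_c)⁻¹ A_cᵀ`) and the spectral radius of `|A_c†| Δ` is less
than `1` (every complex eigenvalue has modulus `< 1`), then every matrix in
`[A_c - Δ, A_c + Δ]` has full column rank. -/
theorem fullColumnRank_of_spectralRadius_lt_one {m n : ℕ}
    (Ac Δ : Matrix (Fin m) (Fin n) ℝ)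
    (hΔ : ∀ i j, 0 ≤ Δ i j)
    (hAc : ∀ x : Fin n → ℝ, Ac.mulVec x = 0 → x = 0)
    (hρ : ∀ μ ∈ spectrum ℂ
      (((((Ac.transpose * Ac)⁻¹ * Ac.transpose).map (fun r => |r|)) * Δ).map
        (Complex.ofReal)), ‖μ‖ < 1) :
    ∀ A : Matrix (Fin m) (Fin n) ℝ, (∀ i j, |A i j - Ac i j| ≤ Δ i j) →
      ∀ x : Fin n → ℝ, A.mulVec x = 0 → x = 0 := by
  intro A hA x hx
  set P : Matrix (Fin n) (Fin m) ℝ := (Ac.transpose * Ac)⁻¹ * Ac.transpose with hP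
  -- invertibility of AcᵀAc
  have hker := Matrix.ker_mulVecLin_transpose_mul_self Ac
  have h0 : ∀ z : Fin n → ℝ, (Ac.transpose * Ac).mulVec z = 0 → z = 0 := by
    intro z hz
    apply hAc
    have hz' : (Ac.transpose * Ac).mulVecLin z = 0 := by
      rw [Matrix.mulVecLin_apply]; exact hz
    have hz'' : Ac.mulVecLin z = 0 := by
      rw [← LinearMap.mem_ker, ← hker, LinearMap.mem_ker]; exact hz'
    rwa [Matrix.mulVecLin_apply] at hz''
  have hU : IsUnit (Ac.transpose * Ac) := by
    rw [← Matrix.mulVec_injective_iff_isUnit]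
    intro a b hab
    have := h0 (a - b) (by rw [Matrix.mulVec_sub, hab, sub_self])
    exact sub_eq_zero.mp this
  have hPA : P * Ac = 1 := by
    rw [hP, Matrix.mul_assoc]
    exact Matrix.nonsing_inv_mul _ ((Matrix.isUnit_iff_isUnit_det _).mp hU)
  -- x = (P * (Ac - A)) *ᵥ x
  have hx2 : x = (P * (Ac - A)).mulVec x := by
    rw [← Matrix.mulVec_mulVec, Matrix.sub_mulVec, hx, sub_zero,
      Matrix.mulVec_mulVec, hPA, Matrix.one_mulVec]
  set B : Matrix (Fin n) (Fin n) ℝ := (P.map (fun r => |r|)) * Δ with hB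
  have hB0 : ∀ i j, 0 ≤ B i j := by
    intro i j
    rw [hB, Matrix.mul_apply]
    exact Finset.sum_nonneg fun k _ => mul_nonneg (abs_nonneg _) (hΔ k j)
  set y : Fin n → ℝ := fun i => |x i| with hy
  have hy0 : ∀ i, 0 ≤ y i := fun i => abs_nonneg _
  -- entrywise bound on P * (Ac - A)
  have hEntry : ∀ i j, |(P * (Ac - A)) i j| ≤ B i j := by
    intro i j
    rw [Matrix.mul_apply]
    refine (Finset.abs_sum_le_sum_abs _ _).trans ?_
    rw [hB, Matrix.mul_apply]
    refine Finset.sum_le_sum fun k _ => ?_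
    rw [abs_mul, Matrix.map_apply]
    refine mul_le_mul_of_nonneg_left ?_ (abs_nonneg _)
    have : |(Ac - A) k j| = |A k j - Ac k j| := by
      rw [Matrix.sub_apply, abs_sub_comm]
    rw [this]
    exact hA k j
  have hyB : ∀ i, y i ≤ B.mulVec y i := by
    intro i
    calc y i = |(P * (Ac - A)).mulVec x i| := by rw [← hx2]
    _ = |∑ j, (P * (Ac - A)) i j * x j| := by rw [Matrix.mulVec, dotProduct]
    _ ≤ ∑ j, |(P * (Ac - A)) i j * x j| := Finset.abs_sum_le_sum_abs _ _
    _ ≤ ∑ j, B i j * y j := by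
        refine Finset.sum_le_sum fun j _ => ?_
        rw [abs_mul]
        exact mul_le_mul_of_nonneg_right (hEntry i j) (abs_nonneg _)
    _ = B.mulVec y i := by rw [Matrix.mulVec, dotProduct]
  -- iterate
  have hiter : ∀ k : ℕ, ∀ i, y i ≤ (B ^ k).mulVec y i := by
    intro k
    induction k with
    | zero => intro i; simp [Matrix.one_mulVec]
    | succ k ih =>
      intro i
      have step : B.mulVec y i ≤ B.mulVec ((B ^ k).mulVec y) i := by
        rw [Matrix.mulVec, Matrix.mulVec, dotProduct, dotProduct]
        exact Finset.sum_le_sum fun j _ =>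
          mul_le_mul_of_nonneg_left (ih j) (hB0 i j)
      calc y i ≤ B.mulVec y i := hyB i
      _ ≤ B.mulVec ((B ^ k).mulVec y) i := step
      _ = (B ^ (k + 1)).mulVec y i := by
          rw [Matrix.mulVec_mulVec, pow_succ']
  -- conclusion
  funext i
  haveI : NeZero n := ⟨fun h => by subst h; exact i.elim0⟩
  set C : Matrix (Fin n) (Fin n) ℂ := B.map Complex.ofReal with hC
  have hCpow : ∀ k : ℕ, C ^ k = (B ^ k).map Complex.ofReal := by
    intro k
    have h1 : C = Complex.ofRealHom.mapMatrix B := rfl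
    rw [h1, ← map_pow]
    rfl
  have htend := aux_norm_pow_tendsto_zero C hρ
  set S : ℝ := ∑ j, y j with hS
  have hbound : ∀ k : ℕ, y i ≤ ‖C ^ k‖ * S := by
    intro k
    refine (hiter k i).trans ?_
    rw [Matrix.mulVec, dotProduct, hS, Finset.mul_sum]
    refine Finset.sum_le_sum fun j _ => ?_
    refine mul_le_mul_of_nonneg_right ?_ (hy0 j)
    refine (le_abs_self _).trans ?_
    have : |(B ^ k) i j| = ‖(C ^ k) i j‖ := by
      rw [hCpow k, Matrix.map_apply, Complex.norm_real, Real.norm_eq_abs]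
    rw [this]
    exact aux_entry_le_norm _ i j
  have hlim : Tendsto (fun k : ℕ => ‖C ^ k‖ * S) atTop (𝓝 0) := by
    simpa using htend.mul_const S
  have : y i ≤ 0 := ge_of_tendsto' hlim hbound
  exact abs_eq_zero.mp (le_antisymm this (abs_nonneg _))
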